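/- Let X be a real Banach space with property α. Then NRA(X) ∩ K(X) is dense in K(X) with respect to the operator norm. -/

import Mathlib

universe u

/-- The numerical radius of a bounded linear operator `T` on a real Banach space `X`. -/
noncomputable def numRadius {X : Type*} [NormedAddCommGroup X] [NormedSpace ℝ X]
    (T : X →L[ℝ] X) : ℝ :=
  sSup {r : ℝ | ∃ (x : X) (f : X →L[ℝ] ℝ), ‖x‖ = 1 ∧ ‖f‖ = 1 ∧ f x = 1 ∧ r = |f (T x)|}

/-- `T` attains its numerical radius. -/
def AttainsNumRadius {X : Type*} [NormedAddCommGroup X] [NormedSpace ℝ X]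
    (T : X →L[ℝ] X) : Prop :=
  ∃ (x : X) (f : X →L[ℝ] ℝ), ‖x‖ = 1 ∧ ‖f‖ = 1 ∧ f x = 1 ∧ |f (T x)| = numRadius T

/-- A real Banach space `X` has property α. -/
def PropertyAlpha (X : Type u) [NormedAddCommGroup X] [NormedSpace ℝ X] : Prop :=
  ∃ (ι : Type u) (x : ι → X) (xstar : ι → (X →L[ℝ] ℝ)) (ρ : ℝ),
    0 ≤ ρ ∧ ρ < 1 ∧
    (∀ i, ‖x i‖ = 1) ∧ (∀ i, ‖xstar i‖ = 1) ∧
    (∀ i, xstar i (x i) = 1) ∧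
    (∀ i j, i ≠ j → |xstar i (x j)| ≤ ρ) ∧
    Metric.closedBall (0 : X) 1 =
      closure (convexHull ℝ (Set.range x ∪ -(Set.range x)))


section auxNRA
variable {X : Type u} [NormedAddCommGroup X] [NormedSpace ℝ X]

/-- If a functional is bounded by 1 on all the generators, it has norm at most 1. -/
lemma aux_norm_le_one {ι : Type u} {x : ι → X}
    (hball : Metric.closedBall (0 : X) 1 =
      closure (convexHull ℝ (Set.range x ∪ -(Set.range x))))
    (f : X →L[ℝ] ℝ) (hf : ∀ i, |f (x i)| ≤ 1) : ‖f‖ ≤ 1 := by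
  have hsub : Metric.closedBall (0 : X) 1 ⊆ {z : X | |f z| ≤ 1} := by
    rw [hball]
    refine closure_minimal (convexHull_min ?_ ?_) ?_
    · rintro z hz
      rcases hz with ⟨i, rfl⟩ | hz
      · exact hf i
      · rw [Set.mem_neg] at hz
        rcases hz with ⟨i, hi⟩
        have := hf i
        rw [hi] at this
        simpa [map_neg] using this
    · have heq : {z : X | |f z| ≤ 1} = {z : X | f z ≤ 1} ∩ {z : X | (-1 : ℝ) ≤ f z} := by
        ext z; simp [abs_le]; tauto
      rw [heq]
      exact (convex_halfSpace_le ⟨f.map_add, f.map_smul⟩ 1).inter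
        (convex_halfSpace_ge ⟨f.map_add, f.map_smul⟩ (-1))
    · exact isClosed_le (continuous_abs.comp f.continuous) continuous_const
  refine f.opNorm_le_bound zero_le_one fun z => ?_
  rcases eq_or_ne z 0 with rfl | hz
  · simp
  · have hzpos : (0:ℝ) < ‖z‖ := norm_pos_iff.mpr hz
    have hw : ‖z‖⁻¹ • z ∈ Metric.closedBall (0 : X) 1 := by
      rw [Metric.mem_closedBall, dist_zero_right, norm_smul, norm_inv, norm_norm]
      rw [inv_mul_cancel₀ (ne_of_gt hzpos)]
    have h1 : |f (‖z‖⁻¹ • z)| ≤ 1 := hsub hw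
    rw [map_smul, smul_eq_mul, abs_mul, abs_inv, abs_norm] at h1
    have : ‖z‖⁻¹ * |f z| ≤ 1 := h1
    have h2 : |f z| ≤ ‖z‖ := by
      have := mul_le_mul_of_nonneg_left h1 (le_of_lt hzpos)
      rw [← mul_assoc, mul_inv_cancel₀ (ne_of_gt hzpos), one_mul, mul_one] at this
      exact this
    calc ‖f z‖ = |f z| := rfl
      _ ≤ 1 * ‖z‖ := by rw [one_mul]; exact h2

/-- Generator-level bound: face correction. -/
lemma aux_gen_bound {ι : Type u} {x : ι → X} {xstar : ι → (X →L[ℝ] ℝ)} {ρ : ℝ}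
    (hρ0 : 0 ≤ ρ) (hρ1 : ρ < 1)
    (hx : ∀ i, ‖x i‖ = 1) (hxs : ∀ i, ‖xstar i‖ = 1)
    (hxx : ∀ i, xstar i (x i) = 1)
    (hij : ∀ i j, i ≠ j → |xstar i (x j)| ≤ ρ)
    (hball : Metric.closedBall (0 : X) 1 =
      closure (convexHull ℝ (Set.range x ∪ -(Set.range x))))
    (R : X →L[ℝ] X) (W : ℝ) (hWR : W ≤ ‖R‖)
    (hW : ∀ j (f : X →L[ℝ] ℝ), ‖f‖ ≤ 1 → f (x j) = 1 → |f (R (x j))| ≤ W)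
    (j : ι) (f : X →L[ℝ] ℝ) (hf : ‖f‖ ≤ 1) :
    |f (R (x j))| ≤ W + (2 / (1 - ρ)) * ‖R‖ * (1 - f (x j)) := by
  have hρ' : (0:ℝ) < 1 - ρ := by linarith
  have hRn : (0:ℝ) ≤ ‖R‖ := norm_nonneg R
  have habs : ∀ i, |f (x i)| ≤ 1 := by
    intro i
    calc |f (x i)| ≤ ‖f‖ * ‖x i‖ := f.le_opNorm (x i)
      _ ≤ 1 := by rw [hx i]; simpa using hf
  set η : ℝ := 1 - f (x j) with hη
  have hη0 : 0 ≤ η := by have := habs j; rw [abs_le] at this; simp [hη]; linarith [this.2]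
  set d : ℝ := 1 - ρ + ρ * η with hd
  have hd0 : 0 < d := by nlinarith
  set a : ℝ := (1 - ρ) / d with ha
  set b : ℝ := η / d with hb
  have ha0 : 0 < a := div_pos hρ' hd0
  have hb0 : 0 ≤ b := div_nonneg hη0 (le_of_lt hd0)
  clear_value b a d η
  set hfun : X →L[ℝ] ℝ := a • f + b • xstar j with hfn
  have happ : ∀ z, hfun z = a * f z + b * xstar j z := by
    intro z; simp [hfn, smul_eq_mul]
  have hhxj : hfun (x j) = 1 := by
    rw [happ, hxx j]
    have : f (x j) = 1 - η := by simp [hη]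
    rw [this]
    rw [ha, hb, mul_one, div_mul_eq_mul_div, ← add_div, div_eq_one_iff_eq hd0.ne', hd]
    ring
  have hhabs : ∀ i, |hfun (x i)| ≤ 1 := by
    intro i
    rcases eq_or_ne i j with rfl | hne
    · rw [hhxj]; norm_num
    · rw [happ]
      have h1 : |a * f (x i)| ≤ a := by
        rw [abs_mul, abs_of_pos ha0]
        nlinarith [habs i, abs_nonneg (f (x i))]
      have h2 : |b * xstar j (x i)| ≤ b * ρ := by
        rw [abs_mul, abs_of_nonneg hb0]
        exact mul_le_mul_of_nonneg_left (hij j i (Ne.symm hne)) hb0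
      have h3 : a + b * ρ = 1 := by
        rw [ha, hb, div_mul_eq_mul_div, ← add_div, div_eq_one_iff_eq hd0.ne', hd]; ring
      calc |a * f (x i) + b * xstar j (x i)| ≤ |a * f (x i)| + |b * xstar j (x i)| :=
            abs_add_le _ _
        _ ≤ a + b * ρ := add_le_add h1 h2
        _ = 1 := h3
  have hhn : ‖hfun‖ ≤ 1 := aux_norm_le_one hball hfun hhabs
  have hWh : |hfun (R (x j))| ≤ W := hW j hfun hhn hhxj
  have hxsR : |xstar j (R (x j))| ≤ ‖R‖ := by
    calc |xstar j (R (x j))| ≤ ‖xstar j‖ * ‖R (x j)‖ := (xstar j).le_opNorm _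
      _ = ‖R (x j)‖ := by rw [hxs j, one_mul]
      _ ≤ ‖R‖ * ‖x j‖ := R.le_opNorm _
      _ = ‖R‖ := by rw [hx j, mul_one]
  -- a * f (R x j) = hfun (R x j) - b * xstar j (R x j)
  have hkey : a * |f (R (x j))| ≤ W + b * ‖R‖ := by
    have : a * f (R (x j)) = hfun (R (x j)) - b * xstar j (R (x j)) := by
      rw [happ]; ring
    calc a * |f (R (x j))| = |a * f (R (x j))| := by
          rw [abs_mul, abs_of_pos ha0]
      _ = |hfun (R (x j)) - b * xstar j (R (x j))| := by rw [this]
      _ ≤ |hfun (R (x j))| + |b * xstar j (R (x j))| := abs_sub _ _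
      _ ≤ W + b * ‖R‖ := by
          refine add_le_add hWh ?_
          rw [abs_mul, abs_of_nonneg hb0]
          exact mul_le_mul_of_nonneg_left hxsR hb0
  -- conclude
  have hW0 : 0 ≤ W := le_trans (abs_nonneg _) (hW j (xstar j) (le_of_eq (hxs j)) (hxx j))
  have hρW : ρ * W ≤ ‖R‖ := by nlinarith
  have hpoly : d * W + η * ‖R‖ ≤ (1 - ρ) * W + 2 * ‖R‖ * η := by
    have := mul_le_mul_of_nonneg_left hρW hη0
    rw [hd]; nlinarith
  have e1 : a * (W + (2 / (1 - ρ)) * ‖R‖ * η) = ((1 - ρ) * W + 2 * ‖R‖ * η) / d := by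
    rw [ha]; field_simp
  have e2 : W + b * ‖R‖ = (d * W + η * ‖R‖) / d := by
    rw [hb]; field_simp
  have hfinal : a * (W + (2 / (1 - ρ)) * ‖R‖ * η) ≥ W + b * ‖R‖ := by
    rw [ge_iff_le, e1, e2]
    gcongr
  have := le_trans hkey hfinal
  have := le_of_mul_le_mul_left this ha0
  linarith [this]

/-- Key bound: on the unit ball. -/
lemma aux_key_bound {ι : Type u} {x : ι → X} {xstar : ι → (X →L[ℝ] ℝ)} {ρ : ℝ}
    (hρ0 : 0 ≤ ρ) (hρ1 : ρ < 1)
    (hx : ∀ i, ‖x i‖ = 1) (hxs : ∀ i, ‖xstar i‖ = 1)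
    (hxx : ∀ i, xstar i (x i) = 1)
    (hij : ∀ i j, i ≠ j → |xstar i (x j)| ≤ ρ)
    (hball : Metric.closedBall (0 : X) 1 =
      closure (convexHull ℝ (Set.range x ∪ -(Set.range x))))
    (R : X →L[ℝ] X) (W : ℝ) (hWR : W ≤ ‖R‖)
    (hW : ∀ j (f : X →L[ℝ] ℝ), ‖f‖ ≤ 1 → f (x j) = 1 → |f (R (x j))| ≤ W)
    (u : X) (hu : ‖u‖ ≤ 1) (g : X →L[ℝ] ℝ) (hg : ‖g‖ ≤ 1) :
    |g (R u)| ≤ W + (2 / (1 - ρ)) * ‖R‖ * (1 - g u) := by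
  have hρ' : (0:ℝ) < 1 - ρ := by linarith
  set K : ℝ := (2 / (1 - ρ)) * ‖R‖ with hK
  have hK0 : 0 ≤ K := by positivity
  have hcont1 : Continuous fun z : X => g (R z) + K * g z := by
    exact ((g.continuous.comp R.continuous).add (continuous_const.mul g.continuous))
  have hcont2 : Continuous fun z : X => K * g z - g (R z) := by
    exact ((continuous_const.mul g.continuous).sub (g.continuous.comp R.continuous))
  have hlin1 : IsLinearMap ℝ fun z : X => g (R z) + K * g z := by
    constructor
    · intro a b; simp [map_add]; ring
    · intro c a; simp [map_smul, smul_eq_mul]; ring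
  have hlin2 : IsLinearMap ℝ fun z : X => K * g z - g (R z) := by
    constructor
    · intro a b; simp [map_add]; ring
    · intro c a; simp [map_smul, smul_eq_mul]; ring
  set D : Set X := {z | g (R z) + K * g z ≤ W + K} ∩ {z | K * g z - g (R z) ≤ W + K} with hD
  have hgen : (Set.range x ∪ -(Set.range x)) ⊆ D := by
    rintro z hz
    rcases hz with ⟨j, rfl⟩ | hz
    · have hb := aux_gen_bound hρ0 hρ1 hx hxs hxx hij hball R W hWR hW j g hg
      rw [← hK, abs_le] at hb
      constructor
      · rw [Set.mem_setOf_eq]; nlinarith [hb.2]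
      · rw [Set.mem_setOf_eq]; nlinarith [hb.1]
    · rw [Set.mem_neg] at hz
      rcases hz with ⟨j, hj⟩
      have hz2 : z = -(x j) := by rw [hj, neg_neg]
      subst hz2
      have hgn : ‖-g‖ ≤ 1 := by rw [norm_neg]; exact hg
      have hb := aux_gen_bound hρ0 hρ1 hx hxs hxx hij hball R W hWR hW j (-g) hgn
      rw [ContinuousLinearMap.neg_apply, ContinuousLinearMap.neg_apply, abs_neg,
        ← hK, abs_le] at hb
      constructor
      · rw [Set.mem_setOf_eq, map_neg, map_neg, map_neg]; nlinarith [hb.1]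
      · rw [Set.mem_setOf_eq, map_neg, map_neg, map_neg]; nlinarith [hb.2]
  have hconv : Convex ℝ D :=
    (convex_halfSpace_le hlin1 (W + K)).inter (convex_halfSpace_le hlin2 (W + K))
  have hclosed : IsClosed D :=
    (isClosed_le hcont1 continuous_const).inter (isClosed_le hcont2 continuous_const)
  have hsub : Metric.closedBall (0 : X) 1 ⊆ D := by
    rw [hball]
    exact closure_minimal (convexHull_min hgen hconv) hclosed
  have hu' : u ∈ D := hsub (mem_closedBall_zero_iff.mpr hu)
  obtain ⟨h1, h2⟩ := hu'
  rw [Set.mem_setOf_eq] at h1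
  rw [Set.mem_setOf_eq] at h2
  rw [abs_le]
  constructor <;> nlinarith

end auxNRA

set_option maxHeartbeats 1000000 in
/-- If `X` has property α, then the numerical radius attaining compact operators are
dense in the compact operators on `X`. -/
theorem NRA_compact_dense_of_propertyAlpha
    {X : Type u} [NormedAddCommGroup X] [NormedSpace ℝ X] [CompleteSpace X]
    (h : PropertyAlpha X) :
    ∀ T : X →L[ℝ] X, IsCompactOperator T →
      T ∈ closure {S : X →L[ℝ] X | AttainsNumRadius S ∧ IsCompactOperator S} := by
  obtain ⟨ι, x, xstar, ρ, hρ0, hρ1, hx, hxs, hxx, hij, hball⟩ := h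
  intro T hT
  rw [Metric.mem_closure_iff]
  intro ε hε
  set c : ℝ := ε / 2 with hc
  have hc0 : 0 < c := by positivity
  set δ : ℝ := c * (1 - ρ) / 2 with hδ
  have hδ0 : 0 < δ := by
    rw [hδ]
    have h1ρ : (0:ℝ) < 1 - ρ := by linarith
    positivity
  have hδeq : 2 * δ = c * (1 - ρ) := by rw [hδ]; ring
  clear_value δ
  -- ι is nonempty
  have hne : Nonempty ι := by
    by_contra hnι
    rw [not_nonempty_iff] at hnι
    have h0 : (0 : X) ∈ Metric.closedBall (0 : X) 1 := by simp
    rw [hball, Set.range_eq_empty x] at h0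
    simp at h0
  -- face suprema for T
  set wset : ι → Set ℝ := fun i =>
    {r | ∃ f : X →L[ℝ] ℝ, ‖f‖ ≤ 1 ∧ f (x i) = 1 ∧ r = |f (T (x i))|} with hwset
  have hwne : ∀ i, (wset i).Nonempty := fun i =>
    ⟨|xstar i (T (x i))|, xstar i, le_of_eq (hxs i), hxx i, rfl⟩
  have hwbdd : ∀ i, ∀ r ∈ wset i, r ≤ ‖T‖ := by
    rintro i r ⟨f, hf1, hf2, rfl⟩
    calc |f (T (x i))| ≤ ‖f‖ * ‖T (x i)‖ := f.le_opNorm _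
      _ ≤ 1 * (‖T‖ * ‖x i‖) := by
          apply mul_le_mul hf1 (T.le_opNorm _) (norm_nonneg _) zero_le_one
      _ = ‖T‖ := by rw [hx i]; ring
  set w : ι → ℝ := fun i => sSup (wset i) with hw
  have hwleT : ∀ i, w i ≤ ‖T‖ := fun i => csSup_le (hwne i) (hwbdd i)
  set W : ℝ := ⨆ i, w i with hWdef
  have hWbddA : BddAbove (Set.range w) := ⟨‖T‖, by rintro r ⟨i, rfl⟩; exact hwleT i⟩
  have hwW : ∀ i, w i ≤ W := fun i => le_ciSup hWbddA i
  -- choose i₀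
  obtain ⟨i₀, hi₀⟩ : ∃ i, W - δ < w i := by
    obtain ⟨i, hi⟩ := exists_lt_of_lt_ciSup (show W - δ < ⨆ i, w i by rw [← hWdef]; linarith)
    exact ⟨i, hi⟩
  -- choose f₁
  obtain ⟨r₁, hr₁mem, hr₁⟩ := exists_lt_of_lt_csSup (hwne i₀)
    (show w i₀ - δ < sSup (wset i₀) from by rw [hw]; simp only []; linarith [hi₀]; )
  obtain ⟨f₁, hf₁n, hf₁x, rfl⟩ := hr₁mem
  -- sign
  obtain ⟨σ, hσabs, hσsign⟩ : ∃ σ : ℝ, |σ| = 1 ∧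
      |f₁ (T (x i₀)) + σ * c| = |f₁ (T (x i₀))| + c := by
    rcases le_or_gt 0 (f₁ (T (x i₀))) with hpos | hneg
    · exact ⟨1, by norm_num, by rw [one_mul, abs_of_nonneg (by linarith),
        abs_of_nonneg hpos]⟩
    · refine ⟨-1, by norm_num, ?_⟩
      rw [abs_of_neg hneg, abs_of_neg (by nlinarith)]
      ring
  -- the perturbed operator
  set A : X →L[ℝ] X := (xstar i₀).smulRight (x i₀) with hA
  set S : X →L[ℝ] X := T + (σ * c) • A with hS
  have hSapp : ∀ f : X →L[ℝ] ℝ, ∀ z, f (S z) = f (T z) + σ * c * xstar i₀ z * f (x i₀) := by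
    intro f z
    rw [hS]
    simp [hA, ContinuousLinearMap.smulRight_apply, smul_eq_mul, map_smul]
    ring
  -- Banach-Alaoglu: the face of i₀ is weak-star compact
  set F : Set (WeakDual ℝ X) :=
    (WeakDual.toStrongDual ⁻¹' Metric.closedBall 0 1) ∩ {φ : WeakDual ℝ X | φ (x i₀) = 1}
    with hF
  have hFcomp : IsCompact F :=
    (WeakDual.isCompact_closedBall (𝕜 := ℝ) 0 1).inter_right
      (isClosed_eq (WeakDual.eval_continuous (x i₀)) continuous_const)
  have hmemF : ∀ f : X →L[ℝ] ℝ, ‖f‖ ≤ 1 → f (x i₀) = 1 →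
      (StrongDual.toWeakDual f) ∈ F := by
    intro f h1 h2
    constructor
    · show WeakDual.toStrongDual (StrongDual.toWeakDual f) ∈ Metric.closedBall 0 1
      rw [Metric.mem_closedBall, dist_zero_right]
      exact h1
    · exact h2
  have hFne : F.Nonempty := ⟨_, hmemF (xstar i₀) (le_of_eq (hxs i₀)) (hxx i₀)⟩
  have hcontF : Continuous fun φ : WeakDual ℝ X => |φ (S (x i₀))| :=
    (WeakDual.eval_continuous (S (x i₀))).abs
  obtain ⟨φ₀, hφ₀F, hφ₀max⟩ := hFcomp.exists_isMaxOn hFne hcontF.continuousOn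
  rw [isMaxOn_iff] at hφ₀max
  set f₀ : X →L[ℝ] ℝ := WeakDual.toStrongDual φ₀ with hf₀
  have hf₀n : ‖f₀‖ ≤ 1 := by
    have := hφ₀F.1
    rw [Set.mem_preimage, Metric.mem_closedBall, dist_zero_right] at this
    exact this
  have hf₀x : f₀ (x i₀) = 1 := hφ₀F.2
  set V : ℝ := |f₀ (S (x i₀))| with hV
  have hf₀max : ∀ f : X →L[ℝ] ℝ, ‖f‖ ≤ 1 → f (x i₀) = 1 → |f (S (x i₀))| ≤ V := by
    intro f h1 h2
    exact hφ₀max _ (hmemF f h1 h2)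
  have hf₀n1 : ‖f₀‖ = 1 := by
    refine le_antisymm hf₀n ?_
    have h1 : (1:ℝ) = f₀ (x i₀) := hf₀x.symm
    calc (1:ℝ) = |f₀ (x i₀)| := by rw [← h1]; norm_num
      _ ≤ ‖f₀‖ * ‖x i₀‖ := f₀.le_opNorm _
      _ = ‖f₀‖ := by rw [hx i₀, mul_one]
  -- lower bound for V
  have hf₁S : |f₁ (S (x i₀))| = |f₁ (T (x i₀))| + c := by
    rw [hSapp f₁ (x i₀), hxx i₀, hf₁x, mul_one, mul_one, hσsign]
  have hV1 : W + c * ρ ≤ V := by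
    have h1 : |f₁ (S (x i₀))| ≤ V := hf₀max f₁ hf₁n hf₁x
    rw [hf₁S] at h1
    nlinarith [hi₀, hr₁]
  -- hypothesis hW for the key bound
  have hWkey : ∀ j (f : X →L[ℝ] ℝ), ‖f‖ ≤ 1 → f (x j) = 1 → |f (S (x j))| ≤ V := by
    intro j f h1 h2
    by_cases hji : j = i₀
    · subst hji; exact hf₀max f h1 h2
    · rw [hSapp f (x j)]
      have e1 : |f (T (x j))| ≤ w j :=
        le_csSup ⟨‖T‖, fun r hr => hwbdd j r hr⟩ ⟨f, h1, h2, rfl⟩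
      have e2 : |σ * c * xstar i₀ (x j) * f (x i₀)| ≤ c * ρ := by
        have h3 : |xstar i₀ (x j)| ≤ ρ := hij i₀ j (fun hh => hji hh.symm)
        have h4 : |f (x i₀)| ≤ 1 := by
          calc |f (x i₀)| ≤ ‖f‖ * ‖x i₀‖ := f.le_opNorm _
            _ ≤ 1 := by rw [hx i₀, mul_one]; exact h1
        rw [abs_mul, abs_mul, abs_mul, hσabs, abs_of_pos hc0, one_mul, mul_assoc]
        refine mul_le_mul_of_nonneg_left ?_ hc0.le
        nlinarith [abs_nonneg (xstar i₀ (x j)), abs_nonneg (f (x i₀))]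
      calc |f (T (x j)) + σ * c * xstar i₀ (x j) * f (x i₀)|
          ≤ |f (T (x j))| + |σ * c * xstar i₀ (x j) * f (x i₀)| := abs_add_le _ _
        _ ≤ w j + c * ρ := add_le_add e1 e2
        _ ≤ W + c * ρ := by linarith [hwW j]
        _ ≤ V := hV1
  have hVS : V ≤ ‖S‖ := by
    rw [hV]
    calc |f₀ (S (x i₀))| ≤ ‖f₀‖ * ‖S (x i₀)‖ := f₀.le_opNorm _
      _ ≤ 1 * (‖S‖ * ‖x i₀‖) :=
          mul_le_mul hf₀n (S.le_opNorm _) (norm_nonneg _) zero_le_one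
      _ = ‖S‖ := by rw [hx i₀]; ring
  -- numRadius S = V
  have hub : ∀ r ∈ {r : ℝ | ∃ (u : X) (f : X →L[ℝ] ℝ),
      ‖u‖ = 1 ∧ ‖f‖ = 1 ∧ f u = 1 ∧ r = |f (S u)|}, r ≤ V := by
    rintro r ⟨u, g, hu, hg, hgu, rfl⟩
    have := aux_key_bound hρ0 hρ1 hx hxs hxx hij hball S V hVS hWkey u (le_of_eq hu)
      g (le_of_eq hg)
    rw [hgu] at this
    simpa using this
  have hnum : |f₀ (S (x i₀))| = numRadius S := by
    refine le_antisymm ?_ ?_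
    · exact le_csSup ⟨V, hub⟩ ⟨x i₀, f₀, hx i₀, hf₀n1, hf₀x, rfl⟩
    · exact Real.sSup_le (by rw [← hV] at *; exact hub) (abs_nonneg _)
  -- compactness of S
  have hAc : IsCompactOperator ⇑((σ * c) • A) := by
    refine ⟨(fun t : ℝ => t • x i₀) '' Set.Icc (-(c+1)) (c+1),
      isCompact_Icc.image (continuous_id.smul continuous_const), ?_⟩
    apply Filter.mem_of_superset (Metric.ball_mem_nhds (0:X) one_pos)
    intro z hz
    have happ : ((σ * c) • A) z = (σ * c * xstar i₀ z) • x i₀ := by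
      rw [hA]
      simp [ContinuousLinearMap.smulRight_apply, smul_smul]
    rw [Set.mem_preimage, happ]
    refine ⟨σ * c * xstar i₀ z, ?_, rfl⟩
    rw [Set.mem_Icc]
    have hz1 : ‖z‖ < 1 := by rwa [Metric.mem_ball, dist_zero_right] at hz
    have hzz : |xstar i₀ z| ≤ ‖z‖ := by
      calc |xstar i₀ z| ≤ ‖xstar i₀‖ * ‖z‖ := (xstar i₀).le_opNorm z
        _ = ‖z‖ := by rw [hxs i₀, one_mul]
    have habs : |σ * c * xstar i₀ z| ≤ c := by
      rw [abs_mul, abs_mul, hσabs, abs_of_pos hc0, one_mul]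
      nlinarith [abs_nonneg (xstar i₀ z)]
    rw [abs_le] at habs
    constructor <;> linarith [habs.1, habs.2]
  have hSc : IsCompactOperator ⇑S := by
    have heq : ⇑S = ⇑T + ⇑((σ * c) • A) := by
      ext z
      rw [hS]
      simp
    rw [heq]
    exact hT.add hAc
  -- distance
  have hdist : dist T S < ε := by
    have hTS : ‖T - S‖ ≤ c := by
      apply ContinuousLinearMap.opNorm_le_bound _ hc0.le
      intro z
      have happ : (T - S) z = -((σ * c * xstar i₀ z) • x i₀) := by
        rw [hS, hA]
        simp [ContinuousLinearMap.smulRight_apply, smul_smul]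
      rw [happ, norm_neg, norm_smul, Real.norm_eq_abs, abs_mul, abs_mul, hσabs,
        one_mul, hx i₀, mul_one, abs_of_pos hc0]
      refine mul_le_mul_of_nonneg_left ?_ hc0.le
      calc |xstar i₀ z| ≤ ‖xstar i₀‖ * ‖z‖ := (xstar i₀).le_opNorm z
        _ = ‖z‖ := by rw [hxs i₀, one_mul]
    rw [dist_eq_norm]
    have : c < ε := by rw [hc]; linarith
    linarith
  exact ⟨S, ⟨⟨x i₀, f₀, hx i₀, hf₀n1, hf₀x, hnum⟩, hSc⟩, hdist⟩
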